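/- arXiv:2110.10956 — 3 statements merged into one kernel-verified Lean document; each statement's English description precedes it below -/
import Mathlib

section
/- Let H be a real Hilbert space, Σ : H → H a bounded self-adjoint positive operator with positive square root Σ^{1/2}, M, b ≥ 1 integers, τ > 0, and β* ∈ H. For each m = 1,…,M let X_m : H → ℝ^b be a bounded linear operator with X_m X_mᵀ invertible, and set X_m† = X_mᵀ(X_m X_mᵀ)^{-1}. Let ε^{(1)},…,ε^{(M)} : Ω → ℝ^b be an independent family of mean-zero random vectors, each satisfying E[exp(⟨v, ε^{(m)}⟩)] ≤ exp((τ²/2)‖v‖²) for all v ∈ ℝ^b. Define Y_m = X_m β* + ε^{(m)}, β̂_m = X_m† Y_m and β̄_M = (1/M)·Σ_{m=1}^M β̂_m. Then E[‖Σ^{1/2}(β̄_M − E[β̄_M])‖²] ≤ (8τ²/M²)·Σ_{m=1}^M Tr[(X_m†)ᵀ Σ X_m†], where (X_m†)ᵀ Σ X_m† is a (self-adjoint positive) operator on ℝ^b and Tr denotes its trace. -/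
/-!
STATEMENT 4: H real Hilbert, Σ bdd self-adjoint positive with positive square root Σ^{1/2},
M, b ≥ 1, τ > 0, β* ∈ H. X_m : H →L ℝ^b with X_m X_mᵀ invertible, X_m† = X_mᵀ(X_mX_mᵀ)^{-1}.
ε^{(m)} an independent family of mean-zero τ²-subgaussian ℝ^b-valued random vectors.
Y_m = X_m β* + ε^{(m)}, β̂_m = X_m† Y_m, β̄_M = (1/M)Σ_m β̂_m. Then
E[‖Σ^{1/2}(β̄_M − E β̄_M)‖²] ≤ (8τ²/M²)·Σ_m Tr[(X_m†)ᵀ Σ X_m†].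
-/

open MeasureTheory ProbabilityTheory ContinuousLinearMap
open scoped RealInnerProductSpace

noncomputable section

/-- Elementary inequality used for subgaussian second moments. -/
lemma sq_le_two_mul_exp_add (x : ℝ) :
    x ^ 2 ≤ 2 * (Real.exp x + Real.exp (-x) - 2) := by
  rcases le_total 0 x with hx | hx
  · nlinarith [Real.quadratic_le_exp_of_nonneg hx, Real.add_one_le_exp (-x)]
  · nlinarith [Real.quadratic_le_exp_of_nonneg (neg_nonneg.mpr hx), Real.add_one_le_exp x]

/-- Second-moment bound for a subgaussian real random variable. -/
lemma subg_sq {Ω : Type*} [MeasurableSpace Ω] (P : Measure Ω) [IsProbabilityMeasure P]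
    {g : Ω → ℝ} (hg : Measurable g) {K : ℝ} (hK : 0 < K)
    (h : ∀ t : ℝ, Integrable (fun ω => Real.exp (t * g ω)) P ∧
      ∫ ω, Real.exp (t * g ω) ∂P ≤ Real.exp (t ^ 2 * K / 2)) :
    Integrable (fun ω => g ω ^ 2) P ∧ ∫ ω, g ω ^ 2 ∂P ≤ 8 * K := by
  have hint : ∀ t : ℝ, Integrable (fun ω => (t * g ω) ^ 2) P := by
    intro t
    have h1 := (h t).1
    have h2 := (h (-t)).1
    have h2' : Integrable (fun ω => Real.exp (-(t * g ω))) P := by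
      simpa [neg_mul] using h2
    have hadd : Integrable (fun ω => Real.exp (t * g ω) + Real.exp (-(t * g ω))) P :=
      h1.add h2'
    refine Integrable.mono' (hadd.const_mul 2) ?_ ?_
    · exact (((hg.const_mul t).pow_const 2)).aestronglyMeasurable
    · filter_upwards with ω
      rw [Real.norm_eq_abs, abs_of_nonneg (sq_nonneg _)]
      nlinarith [sq_le_two_mul_exp_add (t * g ω), Real.exp_pos (t * g ω),
        Real.exp_pos (-(t * g ω))]
  have hK' : (0:ℝ) < 2 / K := by positivity
  set t : ℝ := Real.sqrt (2 / K) with ht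
  have ht2 : t ^ 2 = 2 / K := Real.sq_sqrt hK'.le
  have ht0 : 0 < t := Real.sqrt_pos.mpr hK'
  have hexp1 : t ^ 2 * K / 2 = 1 := by
    rw [ht2]; field_simp
  -- integrability of exp's with parameter t and -t
  have h1 := h t
  have h2 := h (-t)
  have h2int : Integrable (fun ω => Real.exp (-(t * g ω))) P := by
    simpa [neg_mul] using h2.1
  have h2bd : ∫ ω, Real.exp (-(t * g ω)) ∂P ≤ Real.exp 1 := by
    have := h2.2
    simp only [neg_mul] at this
    calc ∫ ω, Real.exp (-(t * g ω)) ∂P ≤ Real.exp ((-t) ^ 2 * K / 2) := this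
      _ = Real.exp 1 := by rw [show (-t) ^ 2 = t ^ 2 by ring, hexp1]
  have h1bd : ∫ ω, Real.exp (t * g ω) ∂P ≤ Real.exp 1 := by
    calc ∫ ω, Real.exp (t * g ω) ∂P ≤ Real.exp (t ^ 2 * K / 2) := h1.2
      _ = Real.exp 1 := by rw [hexp1]
  -- the key integral bound
  have hbound : ∫ ω, (t * g ω) ^ 2 ∂P ≤ 4 * Real.exp 1 - 4 := by
    have hmono : ∫ ω, (t * g ω) ^ 2 ∂P
        ≤ ∫ ω, 2 * (Real.exp (t * g ω) + Real.exp (-(t * g ω)) - 2) ∂P := by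
      refine integral_mono (hint t) ?_ fun ω => sq_le_two_mul_exp_add (t * g ω)
      exact ((h1.1.add h2int).sub (integrable_const 2)).const_mul 2
    have hcalc : ∫ ω, 2 * (Real.exp (t * g ω) + Real.exp (-(t * g ω)) - 2) ∂P
        = 2 * ((∫ ω, Real.exp (t * g ω) ∂P) + (∫ ω, Real.exp (-(t * g ω)) ∂P) - 2) := by
      have hadd : Integrable (fun ω => Real.exp (t * g ω) + Real.exp (-(t * g ω))) P :=
        h1.1.add h2int
      rw [integral_const_mul, integral_sub hadd (integrable_const 2),
        integral_add h1.1 h2int, integral_const]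
      simp
    rw [hcalc] at hmono
    nlinarith [h1bd, h2bd]
  have hsq_int : Integrable (fun ω => g ω ^ 2) P := by
    have := hint 1
    simpa using this
  refine ⟨hsq_int, ?_⟩
  have heq : ∫ ω, (t * g ω) ^ 2 ∂P = t ^ 2 * ∫ ω, g ω ^ 2 ∂P := by
    simp_rw [mul_pow]
    rw [integral_const_mul]
  rw [heq] at hbound
  have hexp_lt : Real.exp 1 < 2.7182818286 := Real.exp_one_lt_d9
  have ht2pos : 0 < t ^ 2 := by positivity
  have : ∫ ω, g ω ^ 2 ∂P ≤ (4 * Real.exp 1 - 4) / t ^ 2 := by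
    rw [le_div_iff₀ ht2pos]
    linarith [hbound]
  calc ∫ ω, g ω ^ 2 ∂P ≤ (4 * Real.exp 1 - 4) / t ^ 2 := this
    _ = (4 * Real.exp 1 - 4) * K / 2 := by rw [ht2, div_div_eq_mul_div]
    _ ≤ 8 * K := by nlinarith [hK.le, hexp_lt, Real.exp_pos 1]

/-- Moore–Penrose pseudoinverse `X† = Xᵀ (X Xᵀ)⁻¹` of an operator with invertible Gram
operator `X Xᵀ`. -/
def pseudoInv {H : Type*} [NormedAddCommGroup H] [InnerProductSpace ℝ H] [CompleteSpace H]
    {b : ℕ} (X : H →L[ℝ] EuclideanSpace ℝ (Fin b)) :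
    EuclideanSpace ℝ (Fin b) →L[ℝ] H :=
  (adjoint X).comp (Ring.inverse (X.comp (adjoint X)))

theorem statement4 {Ω : Type*} [MeasurableSpace Ω] (P : Measure Ω) [IsProbabilityMeasure P]
    {H : Type*} [NormedAddCommGroup H] [InnerProductSpace ℝ H] [CompleteSpace H]
    (S Sh : H →L[ℝ] H)
    (hSsa : ∀ u v : H, ⟪S u, v⟫ = ⟪u, S v⟫) (hSpos : ∀ v : H, 0 ≤ ⟪S v, v⟫)
    (hShsa : ∀ u v : H, ⟪Sh u, v⟫ = ⟪u, Sh v⟫) (hShpos : ∀ v : H, 0 ≤ ⟪Sh v, v⟫)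
    (hsq : Sh.comp Sh = S)
    (M b : ℕ) (hM : 1 ≤ M) (hb : 1 ≤ b) (τ : ℝ) (hτ : 0 < τ) (βstar : H)
    (X : Fin M → (H →L[ℝ] EuclideanSpace ℝ (Fin b)))
    (hinv : ∀ m, IsUnit ((X m).comp (adjoint (X m))))
    (ε : Fin M → Ω → EuclideanSpace ℝ (Fin b))
    (hmeas : ∀ m, Measurable (ε m))
    (hmean : ∀ m, ∫ ω, ε m ω ∂P = 0)
    (hsub : ∀ m, ∀ v : EuclideanSpace ℝ (Fin b),
      Integrable (fun ω => Real.exp ⟪v, ε m ω⟫) P ∧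
        ∫ ω, Real.exp ⟪v, ε m ω⟫ ∂P ≤ Real.exp (τ ^ 2 / 2 * ‖v‖ ^ 2))
    (hindep : iIndepFun ε P)
    (βbar : Ω → H)
    (hβbar : βbar = fun ω =>
      (M : ℝ)⁻¹ • ∑ m : Fin M, pseudoInv (X m) (X m βstar + ε m ω)) :
    ∫ ω, ‖Sh (βbar ω - ∫ ω', βbar ω' ∂P)‖ ^ 2 ∂P
      ≤ 8 * τ ^ 2 / (M : ℝ) ^ 2 *
        ∑ m : Fin M,
          LinearMap.trace ℝ (EuclideanSpace ℝ (Fin b))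
            (((adjoint (pseudoInv (X m))).comp (S.comp (pseudoInv (X m)))) :
              EuclideanSpace ℝ (Fin b) →ₗ[ℝ] EuclideanSpace ℝ (Fin b)) := by
  classical
  have hMne : (M : ℝ) ≠ 0 := Nat.cast_ne_zero.mpr (by omega)
  -- measurability of linear functionals of ε
  have hfmeas : ∀ (m : Fin M) (v : EuclideanSpace ℝ (Fin b)),
      Measurable (fun ω => ⟪v, ε m ω⟫) := fun m v =>
    measurable_const.inner (hmeas m)
  -- second moment bounds
  have key : ∀ (m : Fin M) (v : EuclideanSpace ℝ (Fin b)),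
      Integrable (fun ω => ⟪v, ε m ω⟫ ^ 2) P ∧
        ∫ ω, ⟪v, ε m ω⟫ ^ 2 ∂P ≤ 8 * (τ ^ 2 * ‖v‖ ^ 2) := by
    intro m v
    by_cases hv : v = 0
    · subst hv
      simp only [inner_zero_left]
      constructor
      · simpa using (integrable_const (0:ℝ) : Integrable (fun _ : Ω => (0:ℝ)) P)
      · simp
    · have hK : 0 < τ ^ 2 * ‖v‖ ^ 2 := by
        have : 0 < ‖v‖ := norm_pos_iff.mpr hv
        positivity
    -- apply subg_sq
      refine subg_sq P (hfmeas m v) hK ?_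
      intro t
      have h := hsub m (t • v)
      have hre : (fun ω => Real.exp ⟪t • v, ε m ω⟫) = fun ω => Real.exp (t * ⟪v, ε m ω⟫) := by
        funext ω; rw [real_inner_smul_left]
      have hnorm : τ ^ 2 / 2 * ‖t • v‖ ^ 2 = t ^ 2 * (τ ^ 2 * ‖v‖ ^ 2) / 2 := by
        rw [norm_smul]
        simp [mul_pow]
        ring
      constructor
      · rw [← hre]; exact h.1
      · have := h.2
        rw [hre, hnorm] at this
        exact this
  have hL2 : ∀ (m : Fin M) (v : EuclideanSpace ℝ (Fin b)),
      MemLp (fun ω => ⟪v, ε m ω⟫) 2 P := fun m v =>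
    (memLp_two_iff_integrable_sq (hfmeas m v).aestronglyMeasurable).mpr (key m v).1
  have hL1 : ∀ (m : Fin M) (v : EuclideanSpace ℝ (Fin b)),
      Integrable (fun ω => ⟪v, ε m ω⟫) P := fun m v =>
    (hL2 m v).integrable one_le_two
  -- the standard orthonormal basis of ℝ^b
  set eb : OrthonormalBasis (Fin b) ℝ (EuclideanSpace ℝ (Fin b)) :=
    EuclideanSpace.basisFun (Fin b) ℝ with heb
  have hnormsq : ∀ x : EuclideanSpace ℝ (Fin b), ‖x‖ ^ 2 = ∑ i, ⟪eb i, x⟫ ^ 2 := by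
    intro x
    rw [← real_inner_self_eq_norm_sq, ← OrthonormalBasis.sum_inner_mul_inner eb x x]
    refine Finset.sum_congr rfl fun i _ => ?_
    rw [real_inner_comm x (eb i), sq]
  have hεint : ∀ m, Integrable (ε m) P := by
    intro m
    refine MemLp.integrable one_le_two ?_
    rw [memLp_two_iff_integrable_sq_norm (hmeas m).aestronglyMeasurable]
    have : (fun ω => ‖ε m ω‖ ^ 2) = fun ω => ∑ i, ⟪eb i, ε m ω⟫ ^ 2 :=
      funext fun ω => hnormsq _
    rw [this]
    exact integrable_finset_sum _ fun i _ => (key m (eb i)).1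
  have hmean' : ∀ (m : Fin M) (v : EuclideanSpace ℝ (Fin b)),
      ∫ ω, ⟪v, ε m ω⟫ ∂P = 0 := by
    intro m v
    rw [integral_inner (hεint m) v, hmean m, inner_zero_right]
  -- decomposition of βbar
  set c : H := (M : ℝ)⁻¹ • ∑ m : Fin M, pseudoInv (X m) (X m βstar) with hc
  set Z : Ω → H := fun ω => (M : ℝ)⁻¹ • ∑ m : Fin M, pseudoInv (X m) (ε m ω) with hZdef
  have hsplit : βbar = fun ω => c + Z ω := by
    rw [hβbar]
    funext ω
    rw [hc, hZdef]
    simp only [map_add]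
    rw [Finset.sum_add_distrib, smul_add]
  have hZint : Integrable Z P := by
    rw [hZdef]
    exact (integrable_finset_sum _ fun m _ =>
      (pseudoInv (X m)).integrable_comp (hεint m)).smul ((M : ℝ)⁻¹)
  have hEZ : ∫ ω, Z ω ∂P = 0 := by
    rw [hZdef]
    rw [integral_smul]
    rw [integral_finset_sum _ fun m _ => (pseudoInv (X m)).integrable_comp (hεint m)]
    have : ∀ m : Fin M, ∫ ω, pseudoInv (X m) (ε m ω) ∂P = 0 := by
      intro m
      rw [ContinuousLinearMap.integral_comp_comm _ (hεint m), hmean m, map_zero]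
    simp only [this, Finset.sum_const_zero, smul_zero]
  have hEβ : ∫ ω, βbar ω ∂P = c := by
    rw [hsplit, integral_add (integrable_const c) hZint, integral_const, hEZ, add_zero]
    simp
  have hdiff : ∀ ω, βbar ω - ∫ ω', βbar ω' ∂P = Z ω := by
    intro ω
    rw [hEβ]
    rw [hsplit]
    simp
  -- pointwise square identity
  have hSh : ∀ z : H, ‖Sh z‖ ^ 2 = ⟪S z, z⟫ := by
    intro z
    have h2 : Sh (Sh z) = S z := by
      rw [← ContinuousLinearMap.comp_apply, hsq]
    calc ‖Sh z‖ ^ 2 = ⟪Sh z, Sh z⟫ := (real_inner_self_eq_norm_sq _).symm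
      _ = ⟪z, Sh (Sh z)⟫ := hShsa z (Sh z)
      _ = ⟪z, S z⟫ := by rw [h2]
      _ = ⟪S z, z⟫ := real_inner_comm _ _
  -- the cross terms
  set g : Fin M → Fin M → Ω → ℝ := fun m m' ω =>
    ⟪S (pseudoInv (X m) (ε m ω)), pseudoInv (X m') (ε m' ω)⟫ with hgdef
  have hexp : ∀ ω, ⟪S (Z ω), Z ω⟫ = (M : ℝ)⁻¹ * (M : ℝ)⁻¹ * ∑ m, ∑ m', g m m' ω := by
    intro ω
    simp only [hZdef, hgdef]
    have h1 : S ((M : ℝ)⁻¹ • ∑ m : Fin M, pseudoInv (X m) (ε m ω))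
        = (M : ℝ)⁻¹ • ∑ m : Fin M, S (pseudoInv (X m) (ε m ω)) := by
      rw [ContinuousLinearMap.map_smul, map_sum]
    rw [h1, real_inner_smul_left, real_inner_smul_right, sum_inner]
    simp_rw [inner_sum]
    rw [← mul_assoc]
  -- diagonal terms
  have diag : ∀ m : Fin M, Integrable (g m m) P ∧
      ∫ ω, g m m ω ∂P ≤ 8 * τ ^ 2 *
        LinearMap.trace ℝ (EuclideanSpace ℝ (Fin b))
          (((adjoint (pseudoInv (X m))).comp (S.comp (pseudoInv (X m)))) :
            EuclideanSpace ℝ (Fin b) →ₗ[ℝ] EuclideanSpace ℝ (Fin b)) := by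
    intro m
    set Q := pseudoInv (X m) with hQ
    set A := (adjoint Q).comp (S.comp Q) with hA
    have hgA : ∀ ω, g m m ω = ⟪A (ε m ω), ε m ω⟫ := by
      intro ω
      rw [hgdef]
      simp only [hA, ContinuousLinearMap.comp_apply]
      rw [ContinuousLinearMap.adjoint_inner_left]
    have hsymm : (A : EuclideanSpace ℝ (Fin b) →ₗ[ℝ] EuclideanSpace ℝ (Fin b)).IsSymmetric := by
      intro x y
      show ⟪A x, y⟫ = ⟪x, A y⟫
      simp only [hA, ContinuousLinearMap.comp_apply]
      rw [ContinuousLinearMap.adjoint_inner_left, ContinuousLinearMap.adjoint_inner_right]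
      exact hSsa (Q x) (Q y)
    set u := hsymm.eigenvectorBasis finrank_euclideanSpace_fin with hu
    set lam := hsymm.eigenvalues finrank_euclideanSpace_fin with hlam
    have hApply : ∀ i, A (u i) = lam i • u i := by
      intro i
      have h := hsymm.apply_eigenvectorBasis finrank_euclideanSpace_fin i
      rw [← hu, ← hlam] at h
      exact h
    have hsymm' : ∀ x y : EuclideanSpace ℝ (Fin b), ⟪A x, y⟫ = ⟪x, A y⟫ :=
      fun x y => hsymm x y
    have hAui : ∀ i (x : EuclideanSpace ℝ (Fin b)), ⟪A x, u i⟫ = lam i * ⟪u i, x⟫ := by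
      intro i x
      calc ⟪A x, u i⟫ = ⟪x, A (u i)⟫ := hsymm' x (u i)
        _ = ⟪x, lam i • u i⟫ := by rw [hApply i]
        _ = lam i * ⟪x, u i⟫ := real_inner_smul_right x (u i) (lam i)
        _ = lam i * ⟪u i, x⟫ := by rw [real_inner_comm x (u i)]
    have hgdec : ∀ ω, g m m ω = ∑ i, lam i * ⟪u i, ε m ω⟫ ^ 2 := by
      intro ω
      rw [hgA ω, ← OrthonormalBasis.sum_inner_mul_inner u (A (ε m ω)) (ε m ω)]
      refine Finset.sum_congr rfl fun i _ => ?_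
      rw [show (inner ℝ (A (ε m ω)) (u i) : ℝ) = ⟪A (ε m ω), u i⟫ from rfl, hAui i]
      ring
    have hlam_nonneg : ∀ i, 0 ≤ lam i := by
      intro i
      have h1 : ⟪A (u i), u i⟫ = lam i := by
        rw [hApply i, real_inner_smul_left, real_inner_self_eq_norm_sq,
          u.orthonormal.1 i]
        simp
      have h2 : 0 ≤ ⟪A (u i), u i⟫ := by
        simp only [hA, ContinuousLinearMap.comp_apply]
        rw [ContinuousLinearMap.adjoint_inner_left]
        exact hSpos _
      linarith
    have htr : LinearMap.trace ℝ (EuclideanSpace ℝ (Fin b))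
        (A : EuclideanSpace ℝ (Fin b) →ₗ[ℝ] EuclideanSpace ℝ (Fin b)) = ∑ i, lam i := by
      rw [LinearMap.trace_eq_matrix_trace ℝ u.toBasis, Matrix.trace]
      refine Finset.sum_congr rfl fun i _ => ?_
      rw [Matrix.diag_apply, LinearMap.toMatrix_apply, OrthonormalBasis.coe_toBasis,
        OrthonormalBasis.coe_toBasis_repr_apply, OrthonormalBasis.repr_apply_apply]
      show (inner ℝ (u i) (A (u i)) : ℝ) = lam i
      rw [hApply i, real_inner_smul_right, real_inner_self_eq_norm_sq, u.orthonormal.1 i]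
      simp
    have hint : Integrable (g m m) P := by
      have : g m m = fun ω => ∑ i, lam i * ⟪u i, ε m ω⟫ ^ 2 := funext hgdec
      rw [this]
      exact integrable_finset_sum _ fun i _ => ((key m (u i)).1.const_mul _)
    refine ⟨hint, ?_⟩
    have : ∫ ω, g m m ω ∂P = ∑ i, lam i * ∫ ω, ⟪u i, ε m ω⟫ ^ 2 ∂P := by
      simp_rw [hgdec]
      rw [integral_finset_sum _ fun i _ => ((key m (u i)).1.const_mul _)]
      refine Finset.sum_congr rfl fun i _ => ?_
      rw [integral_const_mul]
    rw [this, htr, Finset.mul_sum]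
    refine Finset.sum_le_sum fun i _ => ?_
    have hb1 : ∫ ω, ⟪u i, ε m ω⟫ ^ 2 ∂P ≤ 8 * (τ ^ 2 * ‖u i‖ ^ 2) := (key m (u i)).2
    rw [u.orthonormal.1 i] at hb1
    simp only [one_pow, mul_one] at hb1
    calc lam i * ∫ ω, ⟪u i, ε m ω⟫ ^ 2 ∂P ≤ lam i * (8 * τ ^ 2) :=
          mul_le_mul_of_nonneg_left hb1 (hlam_nonneg i)
      _ = 8 * τ ^ 2 * lam i := by ring
  -- off-diagonal terms
  have offdiag : ∀ m m' : Fin M, m ≠ m' →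
      Integrable (g m m') P ∧ ∫ ω, g m m' ω ∂P = 0 := by
    intro m m' hne
    set B := (adjoint (pseudoInv (X m'))).comp (S.comp (pseudoInv (X m))) with hB
    have hgB : ∀ ω, g m m' ω = ⟪B (ε m ω), ε m' ω⟫ := by
      intro ω
      rw [hgdef]
      simp only [hB, ContinuousLinearMap.comp_apply]
      rw [ContinuousLinearMap.adjoint_inner_left]
    have hdec : ∀ ω, g m m' ω =
        ∑ j, ⟪adjoint B (eb j), ε m ω⟫ * ⟪eb j, ε m' ω⟫ := by
      intro ω
      rw [hgB, ← OrthonormalBasis.sum_inner_mul_inner eb (B (ε m ω)) (ε m' ω)]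
      refine Finset.sum_congr rfl fun j _ => ?_
      congr 1
      rw [real_inner_comm, ← ContinuousLinearMap.adjoint_inner_left]
    have hpair : ∀ j, IndepFun (fun ω => ⟪adjoint B (eb j), ε m ω⟫)
        (fun ω => ⟪eb j, ε m' ω⟫) P := by
      intro j
      have hφ : Measurable (fun x : EuclideanSpace ℝ (Fin b) => ⟪adjoint B (eb j), x⟫) :=
        measurable_const.inner measurable_id
      have hψ : Measurable (fun x : EuclideanSpace ℝ (Fin b) => ⟪eb j, x⟫) :=
        measurable_const.inner measurable_id
      exact (hindep.indepFun hne).comp hφ hψ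
    have hprod : ∀ j, Integrable
        (fun ω => ⟪adjoint B (eb j), ε m ω⟫ * ⟪eb j, ε m' ω⟫) P := by
      intro j
      exact (hpair j).integrable_mul (hL1 m _) (hL1 m' _)
    constructor
    · have : g m m' = fun ω => ∑ j, ⟪adjoint B (eb j), ε m ω⟫ * ⟪eb j, ε m' ω⟫ :=
        funext hdec
      rw [this]
      exact integrable_finset_sum _ fun j _ => hprod j
    · have : ∫ ω, g m m' ω ∂P
          = ∑ j, ∫ ω, ⟪adjoint B (eb j), ε m ω⟫ * ⟪eb j, ε m' ω⟫ ∂P := by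
        simp_rw [hdec]
        exact integral_finset_sum _ fun j _ => hprod j
      rw [this]
      refine Finset.sum_eq_zero fun j _ => ?_
      have := (hpair j).integral_mul_eq_mul_integral (hL1 m _).aestronglyMeasurable
        (hL1 m' _).aestronglyMeasurable
      rw [show (fun ω => ⟪adjoint B (eb j), ε m ω⟫ * ⟪eb j, ε m' ω⟫)
          = (fun ω => ⟪adjoint B (eb j), ε m ω⟫) * (fun ω => ⟪eb j, ε m' ω⟫) from rfl]
      rw [this, hmean' m' (eb j), mul_zero]
  have gint : ∀ m m' : Fin M, Integrable (g m m') P := by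
    intro m m'
    by_cases h : m = m'
    · subst h; exact (diag m).1
    · exact (offdiag m m' h).1
  -- final computation
  calc ∫ ω, ‖Sh (βbar ω - ∫ ω', βbar ω' ∂P)‖ ^ 2 ∂P
      = ∫ ω, (M : ℝ)⁻¹ * (M : ℝ)⁻¹ * ∑ m, ∑ m', g m m' ω ∂P := by
        refine integral_congr_ae (Filter.Eventually.of_forall fun ω => ?_)
        show ‖Sh (βbar ω - ∫ ω', βbar ω' ∂P)‖ ^ 2 = _
        rw [hdiff ω, hSh (Z ω), hexp ω]
    _ = (M : ℝ)⁻¹ * (M : ℝ)⁻¹ * ∑ m, ∑ m', ∫ ω, g m m' ω ∂P := by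
        rw [integral_const_mul]
        congr 1
        rw [integral_finset_sum _ fun m _ => integrable_finset_sum _ fun m' _ => gint m m']
        refine Finset.sum_congr rfl fun m _ => ?_
        exact integral_finset_sum _ fun m' _ => gint m m'
    _ = (M : ℝ)⁻¹ * (M : ℝ)⁻¹ * ∑ m, ∫ ω, g m m ω ∂P := by
        congr 1
        refine Finset.sum_congr rfl fun m _ => ?_
        rw [Finset.sum_eq_single m]
        · intro m' _ hne
          exact (offdiag m m' (Ne.symm hne)).2
        · intro h
          exact absurd (Finset.mem_univ m) h
    _ ≤ (M : ℝ)⁻¹ * (M : ℝ)⁻¹ * ∑ m, (8 * τ ^ 2 *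
          LinearMap.trace ℝ (EuclideanSpace ℝ (Fin b))
            (((adjoint (pseudoInv (X m))).comp (S.comp (pseudoInv (X m)))) :
              EuclideanSpace ℝ (Fin b) →ₗ[ℝ] EuclideanSpace ℝ (Fin b))) := by
        refine mul_le_mul_of_nonneg_left (Finset.sum_le_sum fun m _ => (diag m).2) ?_
        positivity
    _ = 8 * τ ^ 2 / (M : ℝ) ^ 2 * ∑ m : Fin M,
          LinearMap.trace ℝ (EuclideanSpace ℝ (Fin b))
            (((adjoint (pseudoInv (X m))).comp (S.comp (pseudoInv (X m)))) :
              EuclideanSpace ℝ (Fin b) →ₗ[ℝ] EuclideanSpace ℝ (Fin b)) := by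
        rw [← Finset.mul_sum,
          show (M:ℝ)⁻¹ * (M:ℝ)⁻¹ = ((M:ℝ) ^ 2)⁻¹ by rw [sq, mul_inv],
          div_eq_mul_inv]
        ring


end
end

section
/- Let ε > 0. (i) For every integer k ≥ 0, (k+1)^{1+ε} · Σ_{j=k+1}^∞ j^{-(1+ε)} ≥ (k+1)/ε; in other words, for the sequence λ_j = j^{-(1+ε)} the effective rank satisfies r_k = (Σ_{j>k} λ_j)/λ_{k+1} ≥ (k+1)/ε. (ii) Consequently, for every a > 1 and every real b > 0, the effective dimension k*_b = min{k ≥ 0 : r_k ≥ a·b} satisfies k*_b ≤ a·ε·b. -/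
open Real Filter

lemma aux_bern (ε x : ℝ) (hε : 0 < ε) (hx : 1 ≤ x) :
    x ^ (-ε) - (x + 1) ^ (-ε) ≤ ε * x ^ (-(1 + ε)) := by
  have hx0 : (0:ℝ) < x := lt_of_lt_of_le one_pos hx
  have h1 : x + 1 = x * (1 + 1/x) := by field_simp
  have h2 : (x + 1) ^ (-ε) = x ^ (-ε) * (1 + 1/x) ^ (-ε) := by
    rw [h1, Real.mul_rpow hx0.le (by positivity)]
  have hlog : Real.log (1 + 1/x) ≤ 1/x := by
    have := Real.log_le_sub_one_of_pos (show (0:ℝ) < 1 + 1/x by positivity)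
    linarith
  have h3 : 1 - ε * (1/x) ≤ (1 + 1/x) ^ (-ε) := by
    have he : (1 + 1/x) ^ (-ε) = Real.exp (-ε * Real.log (1 + 1/x)) := by
      rw [Real.rpow_def_of_pos (by positivity)]; ring_nf
    rw [he]
    have h4 : 1 - ε * (1/x) ≤ (-ε * Real.log (1 + 1/x)) + 1 := by nlinarith
    exact h4.trans (Real.add_one_le_exp _)
  have h5 : x ^ (-(1 + ε)) = x ^ (-ε) * x⁻¹ := by
    rw [show -(1+ε) = -ε + (-1) by ring, Real.rpow_add hx0, Real.rpow_neg_one]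
  have h6 : (0:ℝ) ≤ x ^ (-ε) := Real.rpow_nonneg hx0.le _
  rw [h2, h5]
  have := mul_le_mul_of_nonneg_left h3 h6
  have hxinv : ε * (x ^ (-ε) * x⁻¹) = x ^ (-ε) * (ε * (1/x)) := by field_simp
  nlinarith

lemma aux_summable (ε : ℝ) (hε : 0 < ε) (k : ℕ) :
    Summable (fun j : ℕ => ((k : ℝ) + 1 + (j : ℝ)) ^ (-(1 + ε))) := by
  have h0 : Summable (fun n : ℕ => (n : ℝ) ^ (-(1 + ε))) :=
    Real.summable_nat_rpow.mpr (by linarith)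
  have h1 : Summable ((fun n : ℕ => (n : ℝ) ^ (-(1 + ε))) ∘ (fun j : ℕ => k + 1 + j)) :=
    h0.comp_injective (fun a b h => by omega)
  refine h1.congr fun j => ?_
  simp only [Function.comp]
  push_cast
  ring_nf

lemma aux_tsum (ε : ℝ) (hε : 0 < ε) (k : ℕ) :
    (((k : ℝ) + 1) ^ (-ε)) / ε ≤ ∑' j : ℕ, ((k : ℝ) + 1 + (j : ℝ)) ^ (-(1 + ε)) := by
  set c : ℝ := (k : ℝ) + 1 with hc
  have hc1 : (1:ℝ) ≤ c := by have := Nat.cast_nonneg (α := ℝ) k; simp only [hc]; linarith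
  set f : ℕ → ℝ := fun j => (c + (j : ℝ)) ^ (-(1 + ε)) with hf
  set g : ℕ → ℝ := fun j => (c + (j : ℝ)) ^ (-ε) / ε with hg
  have hcj : ∀ j : ℕ, (1:ℝ) ≤ c + j := fun j => by
    have : (0:ℝ) ≤ j := Nat.cast_nonneg j
    linarith
  have hgsucc : ∀ j : ℕ, g (j + 1) = ((c + j) + 1) ^ (-ε) / ε := by
    intro j; simp only [hg]; push_cast; ring_nf
  have htel : ∀ j : ℕ, g j - g (j + 1) ≤ f j := by
    intro j
    have hb := aux_bern ε (c + j) hε (hcj j)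
    rw [hgsucc j]
    simp only [hg, hf]
    rw [div_sub_div_same, div_le_iff₀ hε]
    linarith
  have hnn : ∀ j : ℕ, 0 ≤ g j - g (j + 1) := by
    intro j
    rw [hgsucc j, sub_nonneg]
    apply div_le_div_of_nonneg_right _ hε.le
    exact Real.rpow_le_rpow_of_nonpos (by linarith [hcj j]) (by linarith) (by linarith)
  have hfsum : Summable f := aux_summable ε hε k
  have htsum : Summable (fun j => g j - g (j + 1)) :=
    Summable.of_nonneg_of_le hnn htel hfsum
  -- telescoping value
  have hval : (∑' j, (g j - g (j + 1))) = g 0 := by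
    have h1 : Tendsto (fun n : ℕ => ∑ i ∈ Finset.range n, (g i - g (i + 1))) atTop
        (nhds (∑' j, (g j - g (j + 1)))) := htsum.hasSum.tendsto_sum_nat
    have h2 : Tendsto (fun n : ℕ => ∑ i ∈ Finset.range n, (g i - g (i + 1))) atTop
        (nhds (g 0)) := by
      have hgn : Tendsto g atTop (nhds 0) := by
        have h3 : Tendsto (fun j : ℕ => c + (j : ℝ)) atTop atTop :=
          tendsto_atTop_add_const_left _ _ tendsto_natCast_atTop_atTop
        have h4 : Tendsto (fun j : ℕ => (c + (j : ℝ)) ^ (-ε)) atTop (nhds 0) :=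
          (tendsto_rpow_neg_atTop hε).comp h3
        have := h4.div_const ε
        simpa [hg] using this
      have h5 : Tendsto (fun n : ℕ => g 0 - g n) atTop (nhds (g 0 - 0)) :=
        tendsto_const_nhds.sub hgn
      simp only [sub_zero] at h5
      refine h5.congr fun n => ?_
      rw [Finset.sum_range_sub' g n]
    exact tendsto_nhds_unique h1 h2
  have hle : (∑' j, (g j - g (j + 1))) ≤ ∑' j, f j := Summable.tsum_le_tsum htel htsum hfsum
  rw [hval] at hle
  simpa [hg, hf] using hle

theorem statement9 (ε : ℝ) (hε : 0 < ε) :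
    (∀ k : ℕ,
      ((k : ℝ) + 1) / ε ≤
        ((k : ℝ) + 1) ^ (1 + ε) * ∑' j : ℕ, ((k : ℝ) + 1 + (j : ℝ)) ^ (-(1 + ε))) ∧
    (∀ k : ℕ,
      ((k : ℝ) + 1) / ε ≤
        (∑' j : ℕ, ((k : ℝ) + 1 + (j : ℝ)) ^ (-(1 + ε))) / (((k : ℝ) + 1) ^ (-(1 + ε)))) ∧
    (∀ a b : ℝ, 1 < a → 0 < b → ∀ kstar : ℕ,
      IsLeast {k : ℕ |
          a * b ≤
            (∑' j : ℕ, ((k : ℝ) + 1 + (j : ℝ)) ^ (-(1 + ε))) / (((k : ℝ) + 1) ^ (-(1 + ε)))}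
        kstar →
      (kstar : ℝ) ≤ a * ε * b) := by
  have hpart1 : ∀ k : ℕ,
      ((k : ℝ) + 1) / ε ≤
        ((k : ℝ) + 1) ^ (1 + ε) * ∑' j : ℕ, ((k : ℝ) + 1 + (j : ℝ)) ^ (-(1 + ε)) := by
    intro k
    have hc0 : (0:ℝ) < (k : ℝ) + 1 := by positivity
    have h1 := aux_tsum ε hε k
    have h2 := mul_le_mul_of_nonneg_left h1 (Real.rpow_nonneg hc0.le (1 + ε))
    have h3 : ((k : ℝ) + 1) ^ (1 + ε) * ((((k : ℝ) + 1) ^ (-ε)) / ε)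
        = ((k : ℝ) + 1) / ε := by
      rw [mul_div_assoc', ← Real.rpow_add hc0]
      norm_num
    rw [h3] at h2
    exact h2
  have hpart2 : ∀ k : ℕ,
      ((k : ℝ) + 1) / ε ≤
        (∑' j : ℕ, ((k : ℝ) + 1 + (j : ℝ)) ^ (-(1 + ε))) / (((k : ℝ) + 1) ^ (-(1 + ε))) := by
    intro k
    have hc0 : (0:ℝ) < (k : ℝ) + 1 := by positivity
    have hdiv : (∑' j : ℕ, ((k : ℝ) + 1 + (j : ℝ)) ^ (-(1 + ε))) / (((k : ℝ) + 1) ^ (-(1 + ε)))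
        = ((k : ℝ) + 1) ^ (1 + ε) * ∑' j : ℕ, ((k : ℝ) + 1 + (j : ℝ)) ^ (-(1 + ε)) := by
      rw [Real.rpow_neg hc0.le, div_inv_eq_mul, mul_comm]
    rw [hdiv]
    exact hpart1 k
  refine ⟨hpart1, hpart2, ?_⟩
  intro a b ha hb kstar hleast
  obtain ⟨hmem, hlb⟩ := hleast
  cases kstar with
  | zero =>
      have : (0:ℝ) ≤ a * ε * b := by positivity
      simpa using this
  | succ m =>
      have hnot : m ∉ {k : ℕ |
          a * b ≤
            (∑' j : ℕ, ((k : ℝ) + 1 + (j : ℝ)) ^ (-(1 + ε))) / (((k : ℝ) + 1) ^ (-(1 + ε)))} := by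
        intro hm
        have := hlb hm
        omega
      have hlt : (∑' j : ℕ, ((m : ℝ) + 1 + (j : ℝ)) ^ (-(1 + ε))) /
          (((m : ℝ) + 1) ^ (-(1 + ε))) < a * b := not_le.mp hnot
      have h2 := (hpart2 m).trans_lt hlt
      rw [div_lt_iff₀ hε] at h2
      push_cast
      nlinarith
end

section
/- Let ε > 0 and let λ_j = j^{-(1+ε)} for j ≥ 1. Then for every integer k ≥ 1: (i) R_k := (Σ_{j>k} λ_j)²/(Σ_{j>k} λ_j²) ≥ (k/ε²)·(1 − 1/(k+1))^{2ε}; and (ii) r_k := (Σ_{j>k} λ_j)/λ_{k+1} ≤ (2k/ε)·e^{ε}. -/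
open Real Filter

lemma aux_exp_lb {u t : ℝ} (hu : 0 < u) : 1 + t * Real.log u ≤ u ^ t := by
  rw [Real.rpow_def_of_pos hu]
  have := Real.add_one_le_exp (t * Real.log u)
  calc 1 + t * Real.log u ≤ Real.exp (t * Real.log u) := by linarith
    _ = Real.exp (Real.log u * t) := by ring_nf

lemma aux_upper {x t : ℝ} (hx : 1 ≤ x) (ht : 0 < t) :
    (x + 1) ^ (-(1 + t)) ≤ (x ^ (-t) - (x + 1) ^ (-t)) / t := by
  have hx0 : (0:ℝ) < x := lt_of_lt_of_le one_pos hx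
  have hx1 : (0:ℝ) < x + 1 := by linarith
  rw [le_div_iff₀ ht]
  have hlog : 1 / (x + 1) ≤ Real.log ((x + 1) / x) := by
    have h1 : Real.log (x / (x + 1)) ≤ x / (x + 1) - 1 :=
      Real.log_le_sub_one_of_pos (by positivity)
    have h2 : Real.log ((x + 1) / x) = - Real.log (x / (x + 1)) := by
      rw [← Real.log_inv]; congr 1; field_simp
    have h3 : x / (x + 1) - 1 = -(1 / (x + 1)) := by field_simp; ring
    rw [h2]; rw [h3] at h1; linarith
  have hexp : 1 + t / (x + 1) ≤ ((x + 1) / x) ^ t := by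
    have := aux_exp_lb (t := t) (show (0:ℝ) < (x+1)/x by positivity)
    have h4 : t / (x + 1) ≤ t * Real.log ((x + 1) / x) := by
      rw [div_eq_mul_one_div]
      exact mul_le_mul_of_nonneg_left hlog ht.le
    linarith
  have hsplit : ((x + 1) / x) ^ t = (x + 1) ^ t / x ^ t :=
    Real.div_rpow hx1.le hx0.le t
  have hmul : (x + 1) ^ (-t) * ((x + 1) / x) ^ t = x ^ (-t) := by
    rw [hsplit, Real.rpow_neg hx1.le, Real.rpow_neg hx0.le]
    field_simp
  have hpos : (0:ℝ) < (x + 1) ^ (-t) := Real.rpow_pos_of_pos hx1 _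
  have key : (x + 1) ^ (-t) * (1 + t / (x + 1)) ≤ x ^ (-t) := by
    rw [← hmul]
    exact mul_le_mul_of_nonneg_left hexp hpos.le
  have hsplit2 : (x + 1) ^ (-(1 + t)) = (x + 1) ^ (-t) / (x + 1) := by
    rw [show -(1+t) = -t + (-1) by ring, Real.rpow_add hx1, Real.rpow_neg_one]
    rw [div_eq_mul_inv]
  rw [hsplit2]
  have : (x + 1) ^ (-t) * (1 + t / (x + 1)) =
      (x + 1) ^ (-t) + (x + 1) ^ (-t) / (x + 1) * t := by ring
  rw [this] at key
  linarith

lemma aux_lower {x t : ℝ} (hx : 1 ≤ x) (ht : 0 < t) :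
    (x ^ (-t) - (x + 1) ^ (-t)) / t ≤ x ^ (-(1 + t)) := by
  have hx0 : (0:ℝ) < x := lt_of_lt_of_le one_pos hx
  have hx1 : (0:ℝ) < x + 1 := by linarith
  rw [div_le_iff₀ ht]
  have hlog : -(1 / x) ≤ Real.log (x / (x + 1)) := by
    have h1 : Real.log ((x + 1) / x) ≤ (x + 1) / x - 1 :=
      Real.log_le_sub_one_of_pos (by positivity)
    have h2 : Real.log (x / (x + 1)) = - Real.log ((x + 1) / x) := by
      rw [← Real.log_inv]; congr 1; field_simp
    have h3 : (x + 1) / x - 1 = 1 / x := by field_simp; ring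
    rw [h2]; rw [h3] at h1; linarith
  have hexp : 1 - t / x ≤ (x / (x + 1)) ^ t := by
    have := aux_exp_lb (t := t) (show (0:ℝ) < x/(x+1) by positivity)
    have h4 : -(t / x) ≤ t * Real.log (x / (x + 1)) := by
      have := mul_le_mul_of_nonneg_left hlog ht.le
      calc -(t / x) = t * (-(1/x)) := by ring
        _ ≤ t * Real.log (x / (x + 1)) := this
    linarith
  have hsplit : (x / (x + 1)) ^ t = x ^ t / (x + 1) ^ t :=
    Real.div_rpow hx0.le hx1.le t
  have hmul : x ^ (-t) * (x / (x + 1)) ^ t = (x + 1) ^ (-t) := by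
    rw [hsplit, Real.rpow_neg hx1.le, Real.rpow_neg hx0.le]
    field_simp
  have hpos : (0:ℝ) < x ^ (-t) := Real.rpow_pos_of_pos hx0 _
  have key : x ^ (-t) * (1 - t / x) ≤ (x + 1) ^ (-t) := by
    rw [← hmul]
    exact mul_le_mul_of_nonneg_left hexp hpos.le
  have hsplit2 : x ^ (-(1 + t)) = x ^ (-t) / x := by
    rw [show -(1+t) = -t + (-1) by ring, Real.rpow_add hx0, Real.rpow_neg_one]
    rw [div_eq_mul_inv]
  rw [hsplit2]
  have : x ^ (-t) * (1 - t / x) = x ^ (-t) - x ^ (-t) / x * t := by ring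
  rw [this] at key
  linarith

lemma aux_telescope {c t : ℝ} (hc : 1 ≤ c) (ht : 0 < t) :
    HasSum (fun j : ℕ => (c + j) ^ (-t) - (c + 1 + j) ^ (-t)) (c ^ (-t)) := by
  have hc0 : (0:ℝ) < c := lt_of_lt_of_le one_pos hc
  have hnn : ∀ j : ℕ, 0 ≤ (c + j) ^ (-t) - (c + 1 + j) ^ (-t) := by
    intro j
    have : (c + j : ℝ) ≤ c + 1 + j := by linarith
    have := Real.rpow_le_rpow_of_nonpos (by positivity) this (neg_nonpos.mpr ht.le)
    linarith
  rw [hasSum_iff_tendsto_nat_of_nonneg hnn]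
  have hps : ∀ n : ℕ, ∑ j ∈ Finset.range n, ((c + j) ^ (-t) - (c + 1 + j) ^ (-t))
      = c ^ (-t) - (c + n) ^ (-t) := by
    intro n
    have := Finset.sum_range_sub' (fun i : ℕ => (c + i) ^ (-t)) n
    simp only [Nat.cast_zero, add_zero] at this
    rw [← this]
    apply Finset.sum_congr rfl
    intro i _
    push_cast
    ring_nf
  simp only [hps]
  have h1 : Tendsto (fun n : ℕ => ((c + n : ℝ)) ^ (-t)) atTop (nhds 0) := by
    apply (tendsto_rpow_neg_atTop ht).comp
    exact tendsto_atTop_add_const_left atTop c tendsto_natCast_atTop_atTop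
  have := (tendsto_const_nhds (x := c ^ (-t)) (f := atTop (α := ℕ))).sub h1
  simpa using this

/-!
STATEMENT 10: For λ_j = j^{-(1+ε)} (ε > 0) and every integer k ≥ 1:
(i) R_k = (Σ_{j>k} λ_j)²/(Σ_{j>k} λ_j²) ≥ (k/ε²)·(1 − 1/(k+1))^{2ε};
(ii) r_k = (Σ_{j>k} λ_j)/λ_{k+1} ≤ (2k/ε)·e^ε.
-/
theorem statement10 (ε : ℝ) (hε : 0 < ε) (k : ℕ) (hk : 1 ≤ k) :
    ((k : ℝ) / ε ^ 2) * (1 - 1 / ((k : ℝ) + 1)) ^ (2 * ε) ≤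
      (∑' j : ℕ, ((k : ℝ) + 1 + (j : ℝ)) ^ (-(1 + ε))) ^ 2 /
        (∑' j : ℕ, (((k : ℝ) + 1 + (j : ℝ)) ^ (-(1 + ε))) ^ 2) ∧
    (∑' j : ℕ, ((k : ℝ) + 1 + (j : ℝ)) ^ (-(1 + ε))) / (((k : ℝ) + 1) ^ (-(1 + ε)))
      ≤ 2 * (k : ℝ) / ε * Real.exp ε := by
  have hK : (1:ℝ) ≤ (k:ℝ) := by exact_mod_cast hk
  set K := (k:ℝ) with hKdef
  have hK0 : (0:ℝ) < K := by linarith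
  have hK1 : (0:ℝ) < K + 1 := by linarith
  have hxj : ∀ j : ℕ, (1:ℝ) ≤ K + j := by
    intro j; have : (0:ℝ) ≤ j := Nat.cast_nonneg j; linarith
  have h2e : (0:ℝ) < 1 + 2*ε := by linarith
  have htele1 := (aux_telescope hK hε).div_const ε
  have htele2 := (aux_telescope (show (1:ℝ) ≤ K+1 by linarith) hε).div_const ε
  have htele3 := (aux_telescope hK h2e).div_const (1+2*ε)
  have hposj : ∀ j : ℕ, (0:ℝ) < K + 1 + j := by
    intro j; have : (0:ℝ) ≤ j := Nat.cast_nonneg j; linarith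
  have hfnn : ∀ j:ℕ, 0 ≤ (K+1+(j:ℝ))^(-(1+ε)) :=
    fun j => (Real.rpow_pos_of_pos (hposj j) _).le
  have hle1 : ∀ j:ℕ, (K+1+(j:ℝ))^(-(1+ε)) ≤ ((K+(j:ℝ))^(-ε) - (K+1+(j:ℝ))^(-ε))/ε := by
    intro j
    have h := aux_upper (hxj j) hε
    have e : K + (j:ℝ) + 1 = K + 1 + j := by ring
    rw [e] at h; exact h
  have hsum1 : Summable (fun j:ℕ => (K+1+(j:ℝ))^(-(1+ε))) :=
    Summable.of_nonneg_of_le hfnn hle1 htele1.summable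
  have hS1ub : (∑' j:ℕ, (K+1+(j:ℝ))^(-(1+ε))) ≤ K^(-ε)/ε := by
    calc (∑' j:ℕ, (K+1+(j:ℝ))^(-(1+ε)))
        ≤ ∑' j:ℕ, ((K+(j:ℝ))^(-ε) - (K+1+(j:ℝ))^(-ε))/ε :=
          Summable.tsum_le_tsum hle1 hsum1 htele1.summable
      _ = K^(-ε)/ε := htele1.tsum_eq
  have hle2 : ∀ j:ℕ, ((K+1+(j:ℝ))^(-ε) - (K+1+1+(j:ℝ))^(-ε))/ε ≤ (K+1+(j:ℝ))^(-(1+ε)) := by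
    intro j
    have hx : (1:ℝ) ≤ K+1+j := by have : (0:ℝ) ≤ j := Nat.cast_nonneg j; linarith
    have h := aux_lower hx hε
    have e : K + 1 + (j:ℝ) + 1 = K + 1 + 1 + j := by ring
    rw [e] at h; exact h
  have hS1lb : (K+1)^(-ε)/ε ≤ ∑' j:ℕ, (K+1+(j:ℝ))^(-(1+ε)) := by
    calc (K+1)^(-ε)/ε = ∑' j:ℕ, ((K+1+(j:ℝ))^(-ε) - (K+1+1+(j:ℝ))^(-ε))/ε :=
          htele2.tsum_eq.symm
      _ ≤ _ := Summable.tsum_le_tsum hle2 htele2.summable hsum1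
  have hsq : ∀ j:ℕ, ((K+1+(j:ℝ))^(-(1+ε)))^2 = (K+1+(j:ℝ))^(-(1+(1+2*ε))) := by
    intro j
    rw [sq, ← Real.rpow_add (hposj j)]; congr 1; ring
  have hle3 : ∀ j:ℕ, ((K+1+(j:ℝ))^(-(1+ε)))^2
      ≤ ((K+(j:ℝ))^(-(1+2*ε)) - (K+1+(j:ℝ))^(-(1+2*ε)))/(1+2*ε) := by
    intro j
    rw [hsq j]
    have h := aux_upper (hxj j) h2e
    have e : K + (j:ℝ) + 1 = K + 1 + j := by ring
    rw [e] at h; exact h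
  have hsnn : ∀ j:ℕ, 0 ≤ ((K+1+(j:ℝ))^(-(1+ε)))^2 := fun j => sq_nonneg _
  have hsum2 : Summable (fun j:ℕ => ((K+1+(j:ℝ))^(-(1+ε)))^2) :=
    Summable.of_nonneg_of_le hsnn hle3 htele3.summable
  have hS2ub : (∑' j:ℕ, ((K+1+(j:ℝ))^(-(1+ε)))^2) ≤ K^(-(1+2*ε))/(1+2*ε) := by
    calc (∑' j:ℕ, ((K+1+(j:ℝ))^(-(1+ε)))^2)
        ≤ ∑' j:ℕ, ((K+(j:ℝ))^(-(1+2*ε)) - (K+1+(j:ℝ))^(-(1+2*ε)))/(1+2*ε) :=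
          Summable.tsum_le_tsum hle3 hsum2 htele3.summable
      _ = _ := htele3.tsum_eq
  have hS2pos : 0 < ∑' j:ℕ, ((K+1+(j:ℝ))^(-(1+ε)))^2 := by
    apply Summable.tsum_pos hsum2 hsnn 0
    have := Real.rpow_pos_of_pos (hposj 0) (-(1+ε))
    positivity
  constructor
  · rw [le_div_iff₀ hS2pos]
    have e0 : (1:ℝ) - 1/(K+1) = K/(K+1) := by field_simp; ring
    rw [e0]
    have lhsnn : 0 ≤ K/ε^2 * (K/(K+1))^(2*ε) := by positivity
    have step1 : K/ε^2 * (K/(K+1))^(2*ε) * (∑' j:ℕ, ((K+1+(j:ℝ))^(-(1+ε)))^2)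
        ≤ K/ε^2 * (K/(K+1))^(2*ε) * (K^(-(1+2*ε))/(1+2*ε)) :=
      mul_le_mul_of_nonneg_left hS2ub lhsnn
    have e1 : (K/(K+1))^(2*ε) = K^(2*ε) * ((K+1)^(2*ε))⁻¹ := by
      rw [Real.div_rpow hK0.le hK1.le, div_eq_mul_inv]
    have e2 : K * (K^(2*ε) * K^(-(1+2*ε))) = 1 := by
      rw [← Real.rpow_add hK0, show 2*ε + -(1+2*ε) = -1 by ring, Real.rpow_neg_one]
      exact mul_inv_cancel₀ hK0.ne'
    have step2 : K/ε^2 * (K/(K+1))^(2*ε) * (K^(-(1+2*ε))/(1+2*ε))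
        = ((K+1)^(2*ε))⁻¹ / (ε^2 * (1+2*ε)) := by
      rw [e1]
      have e4 : K/ε^2 * (K^(2*ε) * ((K+1)^(2*ε))⁻¹) * (K^(-(1+2*ε))/(1+2*ε))
          = (K * (K^(2*ε) * K^(-(1+2*ε)))) * ((K+1)^(2*ε))⁻¹ / ε^2 / (1+2*ε) := by
        ring
      rw [e4, e2, one_mul, div_div]
    have e3 : ((K+1)^(-ε)/ε)^2 = ((K+1)^(2*ε))⁻¹ / ε^2 := by
      rw [div_pow, sq ((K+1)^(-ε)), ← Real.rpow_add hK1,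
        show -ε + -ε = -(2*ε) by ring, Real.rpow_neg hK1.le]
    have step3 : ((K+1)^(2*ε))⁻¹ / (ε^2*(1+2*ε)) ≤ ((K+1)^(2*ε))⁻¹ / ε^2 :=
      div_le_div_of_nonneg_left (by positivity) (by positivity) (by nlinarith)
    have step4 : ((K+1)^(-ε)/ε)^2 ≤ (∑' j:ℕ, (K+1+(j:ℝ))^(-(1+ε)))^2 :=
      pow_le_pow_left₀ (by positivity) hS1lb 2
    linarith
  · have hD : (0:ℝ) < (K+1)^(-(1+ε)) := Real.rpow_pos_of_pos hK1 _
    rw [div_le_iff₀ hD]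
    have hX : (0:ℝ) < (K+1)^((1:ℝ)+ε) := Real.rpow_pos_of_pos hK1 _
    have eA : (K+1)^((1:ℝ)+ε) = (K+1) * (K+1)^ε := by
      rw [Real.rpow_add hK1, Real.rpow_one]
    have eC : ((K+1)/K)^ε ≤ Real.exp ε := by
      rw [Real.rpow_def_of_pos (by positivity)]
      apply Real.exp_le_exp.mpr
      have hlog : Real.log ((K+1)/K) ≤ 1/K := by
        have h := Real.log_le_sub_one_of_pos (show (0:ℝ) < (K+1)/K by positivity)
        have e : (K+1)/K - 1 = 1/K := by field_simp; ring
        rw [e] at h; exact h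
      have h1K : 1/K ≤ 1 := by rw [div_le_one hK0]; linarith
      nlinarith
    have key2 : K^(-ε) * (K+1)^((1:ℝ)+ε) ≤ 2*K*Real.exp ε := by
      rw [eA]
      have eB : K^(-ε) * (K+1)^ε = ((K+1)/K)^ε := by
        rw [Real.div_rpow hK1.le hK0.le, Real.rpow_neg hK0.le, div_eq_mul_inv]
        ring
      calc K^(-ε) * ((K+1) * (K+1)^ε) = (K+1) * (K^(-ε) * (K+1)^ε) := by ring
        _ = (K+1) * ((K+1)/K)^ε := by rw [eB]
        _ ≤ (2*K) * Real.exp ε := by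
            apply mul_le_mul (by linarith) eC (Real.rpow_nonneg (by positivity) _)
              (by linarith)
    have final2 : K^(-ε)/ε ≤ 2*K/ε * Real.exp ε * (K+1)^(-(1+ε)) := by
      rw [show -(1+ε) = -((1:ℝ)+ε) by ring, Real.rpow_neg hK1.le ((1:ℝ)+ε)]
      have er : 2*K/ε * Real.exp ε * ((K+1)^((1:ℝ)+ε))⁻¹
          = (2*K*Real.exp ε / (K+1)^((1:ℝ)+ε)) / ε := by
        field_simp
      rw [er]
      gcongr
      rw [le_div_iff₀ hX]
      exact key2
    exact hS1ub.trans final2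
end
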